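/- arXiv:1005.3193 — 8 statements merged into one kernel-verified Lean document; each statement's English description precedes it below -/
import Mathlib

section
/- Let W be a module, and let a, b, x, z be submodules with W = x ⊕ a = x ⊕ b = z ⊕ a = z ⊕ b. Then the endomorphism M_{xabz} := P^a_x - P^z_b is invertible, with inverse equal to M_{zabx} = P^a_z - P^x_b. -/
/-- The projection onto `x` along `a` (image `x`, kernel `a`), denoted `P^a_x`. -/
noncomputable def projEnd {R W : Type*} [Ring R] [AddCommGroup W] [Module R W]
    (x a : Submodule R W) (h : IsCompl x a) : Module.End R W :=
  x.subtype ∘ₗ x.linearProjOfIsCompl a h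

lemma projEnd_apply_left {R W : Type*} [Ring R] [AddCommGroup W] [Module R W]
    (x a : Submodule R W) (h : IsCompl x a) {w : W} (hw : w ∈ x) : projEnd x a h w = w := by
  have := Submodule.linearProjOfIsCompl_apply_left h ⟨w, hw⟩
  simp only [projEnd, LinearMap.comp_apply, Submodule.subtype_apply]
  exact congrArg Subtype.val this

lemma projEnd_apply_right {R W : Type*} [Ring R] [AddCommGroup W] [Module R W]
    (x a : Submodule R W) (h : IsCompl x a) {w : W} (hw : w ∈ a) : projEnd x a h w = 0 := by
  simp only [projEnd, LinearMap.comp_apply, Submodule.subtype_apply,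
    Submodule.projectionOnto_apply_of_mem_right h hw, ZeroMemClass.coe_zero]
  exact congrArg Subtype.val (Submodule.projectionOnto_apply_of_mem_right h hw)

lemma projEnd_mem {R W : Type*} [Ring R] [AddCommGroup W] [Module R W]
    (x a : Submodule R W) (h : IsCompl x a) (w : W) : projEnd x a h w ∈ x :=
  (x.linearProjOfIsCompl a h w).2

lemma sub_projEnd_mem {R W : Type*} [Ring R] [AddCommGroup W] [Module R W]
    (x a : Submodule R W) (h : IsCompl x a) (w : W) : w - projEnd x a h w ∈ a := by
  have hsum := Submodule.projection_add_projection_eq_self h w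
  have heq : w - projEnd x a h w = (a.linearProjOfIsCompl x h.symm w : W) := by
    change w - x.projection a h w = (a.projection x h.symm w : W)
    rw [eq_comm, eq_sub_iff_add_eq, add_comm]; exact hsum
  rw [heq]
  exact (a.linearProjOfIsCompl x h.symm w).2

lemma key {R W : Type*} [Ring R] [AddCommGroup W] [Module R W]
    (x a z b : Submodule R W)
    (hxa : IsCompl x a) (hxb : IsCompl x b) (hza : IsCompl z a) (hzb : IsCompl z b) :
    (projEnd x a hxa - projEnd b z hzb.symm) * (projEnd z a hza - projEnd b x hxb.symm) = 1 := by
  ext w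
  simp only [Module.End.mul_apply, LinearMap.sub_apply, Module.End.one_apply, map_sub]
  have h1 : projEnd x a hxa (projEnd z a hza w) = projEnd x a hxa w := by
    have h := projEnd_apply_right x a hxa (sub_projEnd_mem z a hza w)
    rw [map_sub, sub_eq_zero] at h
    exact h.symm
  have h2 : projEnd b z hzb.symm (projEnd z a hza w) = 0 :=
    projEnd_apply_right b z hzb.symm (projEnd_mem z a hza w)
  have h3 : projEnd b z hzb.symm (projEnd b x hxb.symm w) = projEnd b x hxb.symm w :=
    projEnd_apply_left b z hzb.symm (projEnd_mem b x hxb.symm w)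
  have h4 : projEnd x a hxa (projEnd b x hxb.symm w)
      = projEnd x a hxa w - (w - projEnd b x hxb.symm w) := by
    have h := projEnd_apply_left x a hxa (sub_projEnd_mem b x hxb.symm w)
    rw [map_sub] at h
    rw [← h]; abel
  rw [h1, h2, h3, h4]
  abel

/-- if `W = x ⊕ a = x ⊕ b = z ⊕ a = z ⊕ b`, then
`M_{xabz} = P^a_x - P^z_b` is invertible with inverse `M_{zabx} = P^a_z - P^x_b`. -/
theorem stmt1 {R W : Type*} [Ring R] [AddCommGroup W] [Module R W]
    (x a z b : Submodule R W)
    (hxa : IsCompl x a) (hxb : IsCompl x b) (hza : IsCompl z a) (hzb : IsCompl z b) :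
    (projEnd x a hxa - projEnd b z hzb.symm) * (projEnd z a hza - projEnd b x hxb.symm) = 1 ∧
    (projEnd z a hza - projEnd b x hxb.symm) * (projEnd x a hxa - projEnd b z hzb.symm) = 1 := by
  exact ⟨key x a z b hxa hxb hza hzb, key z a x b hza hzb hxa hxb⟩
end

section
/- Let 𝔸 be an associative unital algebra over a commutative ring K and fix a ∈ 𝔸. On the set G(𝔸,a) = { x ∈ 𝔸 | 1 - x·a is invertible }, the binary operation x ·_a y := x + y - x·a·y is a group law with neutral element 0 and inverse j_a(x) = -(1 - x·a)⁻¹ · x. -/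
/-- on `G(𝔸,a) = { x | 1 - x·a invertible }` the operation
`x ·_a y = x + y - x·a·y` is a group law with neutral element `0` and
inverse `j_a(x) = -(1 - x·a)⁻¹·x`. -/
theorem stmt3 {K A : Type*} [CommRing K] [Ring A] [Algebra K A] (a : A) :
    -- closure
    (∀ x y : A, IsUnit (1 - x * a) → IsUnit (1 - y * a) →
      IsUnit (1 - (x + y - x * a * y) * a)) ∧
    -- associativity
    (∀ x y z : A,
      ((x + y - x * a * y) + z - (x + y - x * a * y) * a * z)
        = (x + (y + z - y * a * z) - x * a * (y + z - y * a * z))) ∧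
    -- neutral element 0
    IsUnit (1 - (0 : A) * a) ∧
    (∀ x : A, x + 0 - x * a * 0 = x) ∧ (∀ x : A, 0 + x - 0 * a * x = x) ∧
    -- inverses: j_a(x) = -(1 - x·a)⁻¹ · x
    (∀ x : A, IsUnit (1 - x * a) →
      IsUnit (1 - (-(Ring.inverse (1 - x * a) * x)) * a) ∧
      x + (-(Ring.inverse (1 - x * a) * x)) - x * a * (-(Ring.inverse (1 - x * a) * x)) = 0 ∧
      (-(Ring.inverse (1 - x * a) * x)) + x - (-(Ring.inverse (1 - x * a) * x)) * a * x = 0) := by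
  refine ⟨?_, ?_, ?_, ?_, ?_, ?_⟩
  · intro x y hx hy
    have h : 1 - (x + y - x * a * y) * a = (1 - x * a) * (1 - y * a) := by noncomm_ring
    rw [h]
    exact hx.mul hy
  · intro x y z; noncomm_ring
  · simp
  · intro x; simp
  · intro x; simp
  · intro x hx
    set u := Ring.inverse (1 - x * a) with hu
    have h1 : (1 - x * a) * u = 1 := Ring.mul_inverse_cancel _ hx
    have h2 : u * (1 - x * a) = 1 := Ring.inverse_mul_cancel _ hx
    refine ⟨?_, ?_, ?_⟩
    · have h2' : u - u * (x * a) = 1 := by have h := h2; rw [mul_sub, mul_one] at h; exact h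
      have h : 1 - -(u * x) * a = u := by rw [← h2']; noncomm_ring
      rw [h]
      exact ⟨⟨u, 1 - x * a, h2, h1⟩, rfl⟩
    · have h : x + -(u * x) - x * a * -(u * x) = x - (1 - x * a) * (u * x) := by noncomm_ring
      rw [h, ← mul_assoc, h1, one_mul, sub_self]
    · have h : -(u * x) + x - -(u * x) * a * x = x - u * ((1 - x * a) * x) := by noncomm_ring
      rw [h, ← mul_assoc, h2, one_mul, sub_self]
end

section
/- Let K be a commutative ring, n ≥ 1, A ∈ M(n,n;K) symmetric (Aᵗ = A). Then the set Ô_n(A;K) = { X ∈ M(n,n;K) | Xᵗ + X = Xᵗ A X } is closed under the operation X ·_A Y := X + Y - X A Y, and (Ô_n(A;K), ·_A) is a monoid with identity element 0. -/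
open Matrix

lemma key_s6 {K : Type*} [CommRing K] {n : ℕ} (a x y xt yt : Matrix (Fin n) (Fin n) K)
    (hx : xt * a * x = xt + x) (hy : yt * a * y = yt + y) :
    (xt + yt - yt * a * xt) * a * (x + y - x * a * y)
      = (xt + yt - yt * a * xt) + (x + y - x * a * y) := by
  calc (xt + yt - yt * a * xt) * a * (x + y - x * a * y)
      = xt * a * x + xt * a * y - xt * a * x * a * y + yt * a * x
          + yt * a * y - yt * a * x * a * y - yt * a * (xt * a * x)
          - yt * a * (xt * a * y) + yt * a * (xt * a * x) * a * y := by
        noncomm_ring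
    _ = (xt + x) + xt * a * y - (xt + x) * a * y + yt * a * x
          + (yt + y) - yt * a * x * a * y - yt * a * (xt + x)
          - yt * a * (xt * a * y) + yt * a * (xt + x) * a * y := by
        rw [hx, hy]
    _ = (xt + yt - yt * a * xt) + (x + y - x * a * y) := by noncomm_ring

/-- for a symmetric matrix `A`, the set
`Ô_n(A;K) = { X | Xᵗ + X = Xᵗ A X }` is closed under `X ·_A Y = X + Y - XAY`,
and this operation makes it a monoid with identity element `0`. -/
theorem stmt6 {K : Type*} [CommRing K] {n : ℕ} (hn : 1 ≤ n)
    (A : Matrix (Fin n) (Fin n) K) (hA : Aᵀ = A) :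
    -- 0 belongs to the set
    ((0 : Matrix (Fin n) (Fin n) K)ᵀ + 0 = (0 : Matrix (Fin n) (Fin n) K)ᵀ * A * 0) ∧
    -- closure under the product
    (∀ X Y : Matrix (Fin n) (Fin n) K,
      Xᵀ + X = Xᵀ * A * X → Yᵀ + Y = Yᵀ * A * Y →
      (X + Y - X * A * Y)ᵀ + (X + Y - X * A * Y)
        = (X + Y - X * A * Y)ᵀ * A * (X + Y - X * A * Y)) ∧
    -- associativity
    (∀ X Y Z : Matrix (Fin n) (Fin n) K,
      ((X + Y - X * A * Y) + Z - (X + Y - X * A * Y) * A * Z)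
        = (X + (Y + Z - Y * A * Z) - X * A * (Y + Z - Y * A * Z))) ∧
    -- 0 is a two-sided identity
    (∀ X : Matrix (Fin n) (Fin n) K, X + 0 - X * A * 0 = X) ∧
    (∀ X : Matrix (Fin n) (Fin n) K, 0 + X - 0 * A * X = X) := by
  refine ⟨by simp, ?_, fun X Y Z => by noncomm_ring, fun X => by simp, fun X => by simp⟩
  intro X Y hX hY
  have h := key_s6 A X Y Xᵀ Yᵀ hX.symm hY.symm
  have ht : (X + Y - X * A * Y)ᵀ = Xᵀ + Yᵀ - Yᵀ * A * Xᵀ := by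
    simp [transpose_sub, transpose_add, transpose_mul, hA, Matrix.mul_assoc]
  rw [ht, h]
end

section
/- Let 𝔸 = M(n,n;K) with A ∈ M(n,n;K) fixed, and define GL_n(A;K) = { X | 1 - AX is invertible } with product X ·_A Y = X + Y - XAY. Then the Lie bracket of this group (computed via dual-numbers scalar extension, i.e., the commutator of ε₁X and ε₂Y in the second tangent group) is [X,Y]_A = XAY - YAX. -/
open TrivSqZeroExt

/-- in the second-order dual-numbers scalar extension
`K[ε₁][ε₂]` of the matrix algebra, with the group product
`X ·_A Z = X + Z - ZAX` of `GL_n(A;K)`, the element `ε₁(-X)` is the inverse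
of `ε₁X` (and similarly for `ε₂Y`), and the group commutator
`(ε₁X)(ε₂Y)(ε₁X)⁻¹(ε₂Y)⁻¹` equals `ε₁ε₂(XAY - YAX)`; i.e. the Lie bracket of
the group `GL_n(A;K)` is `[X,Y]_A = XAY - YAX`. -/
theorem stmt7 {K : Type*} [CommRing K] {n : ℕ}
    (A X Y : Matrix (Fin n) (Fin n) K) :
    letI R := Matrix (Fin n) (Fin n) K
    letI D := DualNumber (DualNumber R)
    letI A' : D := inl (inl A)
    letI op : D → D → D := fun u v => u + v - v * A' * u
    letI e₁ : R → D := fun M => inl (inr M)   -- ε₁ M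
    letI e₂ : R → D := fun M => inr (inl M)   -- ε₂ M
    -- ε₁(-X) is the ·_A-inverse of ε₁X, and ε₂(-Y) that of ε₂Y
    (op (e₁ X) (e₁ (-X)) = 0 ∧ op (e₁ (-X)) (e₁ X) = 0) ∧
    (op (e₂ Y) (e₂ (-Y)) = 0 ∧ op (e₂ (-Y)) (e₂ Y) = 0) ∧
    -- the group commutator equals ε₁ε₂ (XAY - YAX)
    op (op (op (e₁ X) (e₂ Y)) (e₁ (-X))) (e₂ (-Y))
      = inr (inr (X * A * Y - Y * A * X)) := by
  refine ⟨⟨?_,?_⟩,⟨?_,?_⟩,?_⟩ <;>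
  · simp only [mul_neg, neg_mul, inl_mul_inl, inl_mul_inr, inr_mul_inl, inr_mul_inr,
      smul_eq_mul, op_smul_eq_mul, inl_neg, inr_neg, ← inl_mul_inl]
    simp only [TrivSqZeroExt.ext_iff, fst_add, snd_add, fst_sub, snd_sub, fst_mul, snd_mul,
      fst_inl, snd_inl, fst_inr, snd_inr, fst_neg, snd_neg, fst_zero, snd_zero]
    simp only [smul_eq_mul, op_smul_eq_mul, smul_zero, zero_smul, MulOpposite.op_zero,
      mul_zero, zero_mul, add_zero, zero_add, sub_zero, zero_sub, neg_zero, neg_neg,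
      sub_self, neg_add_cancel, add_neg_cancel, inl_mul_inl, inl_mul_inr, inr_mul_inl,
      inr_mul_inr, fst_mul, snd_mul, fst_add, snd_add, fst_sub, snd_sub, fst_neg, snd_neg,
      fst_inl, snd_inl, fst_inr, snd_inr, fst_zero, snd_zero, mul_neg, neg_mul,
      mul_add, add_mul, mul_sub, sub_mul]
    repeat' constructor
    all_goals abel
end

section
/- Let W be a module with a non-degenerate sesquilinear form β (Hermitian or skew-Hermitian). If the pair of submodules (x,a) is adjoinable, i.e., W = x ⊕ a and the projection P := P^a_x admits an adjoint P* with β(v, Pw) = β(P*v, w) for all v, w, then P* is idempotent, ker P* = x^⊥, im P* = a^⊥, so that W = x^⊥ ⊕ a^⊥ and (P^a_x)* = P^{x^⊥}_{a^⊥}. Moreover (x^⊥)^⊥ = x and (a^⊥)^⊥ = a. -/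
/-- Orthogonal complement (as a set) of a set `S` with respect to a form `β`. -/
def perpSet {B W : Type*} (β : W → W → B) [Zero B] (S : Set W) : Set W :=
  {w | ∀ s ∈ S, β s w = 0}

/-- for a non-degenerate Hermitian or skew-Hermitian sesquilinear
form `β` on `W` and an adjoinable transversal pair `(x,a)` with projection
`P = P^a_x` and adjoint `P*`, the adjoint `P*` is idempotent, has kernel `x^⊥`
and image `a^⊥`, coincides with the projection `P^{x^⊥}_{a^⊥}` (so that
`W = x^⊥ ⊕ a^⊥`), and `(x^⊥)^⊥ = x`, `(a^⊥)^⊥ = a`. -/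
theorem stmt8 {B W : Type*} [Ring B] [StarRing B] [AddCommGroup W] [Module B W]
    (β : W → W → B)
    (hadd₁ : ∀ v v' w : W, β (v + v') w = β v w + β v' w)
    (hadd₂ : ∀ v w w' : W, β v (w + w') = β v w + β v w')
    (hsmul₁ : ∀ (r : B) (v w : W), β (r • v) w = star r * β v w)
    (hsmul₂ : ∀ (r : B) (v w : W), β v (r • w) = β v w * r)
    (hnd₁ : ∀ v : W, (∀ w : W, β v w = 0) → v = 0)
    (hnd₂ : ∀ v : W, (∀ w : W, β w v = 0) → v = 0)
    (hherm : (∀ v w : W, β v w = star (β w v)) ∨ (∀ v w : W, β v w = -star (β w v)))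
    (x a : Submodule B W) (hxa : IsCompl x a)
    (P P' : W → W)
    (hP : ∀ w : W, P w ∈ x ∧ w - P w ∈ a)  -- P is the projection P^a_x
    (hadj : ∀ v w : W, β v (P w) = β (P' v) w) :
    -- P* is idempotent
    (∀ v : W, P' (P' v) = P' v) ∧
    -- ker P* = x^⊥
    ({v : W | P' v = 0} = perpSet β (x : Set W)) ∧
    -- im P* = a^⊥
    (Set.range P' = perpSet β (a : Set W)) ∧
    -- (P^a_x)* = P^{x^⊥}_{a^⊥}: P* projects onto a^⊥ along x^⊥, so W = x^⊥ ⊕ a^⊥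
    (∀ v : W, P' v ∈ perpSet β (a : Set W) ∧ v - P' v ∈ perpSet β (x : Set W)) ∧
    (perpSet β (x : Set W) ∩ perpSet β (a : Set W) = {0}) ∧
    -- biorthogonality
    (perpSet β (perpSet β (x : Set W)) = (x : Set W)) ∧
    (perpSet β (perpSet β (a : Set W)) = (a : Set W)) := by
  -- basic consequences of additivity
  have hz1 : ∀ w : W, β 0 w = 0 := fun w => by
    have h := hadd₁ 0 0 w; rw [add_zero] at h; exact left_eq_add.mp h
  have hz2 : ∀ v : W, β v 0 = 0 := fun v => by
    have h := hadd₂ v 0 0; rw [add_zero] at h; exact left_eq_add.mp h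
  have hsub₁ : ∀ v v' w : W, β (v - v') w = β v w - β v' w := fun v v' w => by
    have h := hadd₁ (v - v') v' w; rw [sub_add_cancel] at h
    exact eq_sub_of_add_eq h.symm
  have hsub₂ : ∀ v w w' : W, β v (w - w') = β v w - β v w' := fun v w w' => by
    have h := hadd₂ v (w - w') w'; rw [sub_add_cancel] at h
    exact eq_sub_of_add_eq h.symm
  -- zero-symmetry
  have hsymm0 : ∀ v w : W, β v w = 0 → β w v = 0 := by
    intro v w h
    rcases hherm with hh | hh
    · rw [hh w v, h, star_zero]
    · rw [hh w v, h, star_zero, neg_zero]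
  -- extensionality from nondegeneracy
  have hext₁ : ∀ u u' : W, (∀ w : W, β u w = β u' w) → u = u' := by
    intro u u' h
    exact sub_eq_zero.mp (hnd₁ _ (fun w => by rw [hsub₁, h, sub_self]))
  -- P fixes x and kills a
  have hinf : ∀ u : W, u ∈ x → u ∈ a → u = 0 := by
    intro u hx ha
    have : u ∈ x ⊓ a := Submodule.mem_inf.mpr ⟨hx, ha⟩
    rw [hxa.inf_eq_bot] at this
    exact (Submodule.mem_bot B).mp this
  have hPx : ∀ w : W, w ∈ x → P w = w := by
    intro w hw
    have h2 : w - P w ∈ x := Submodule.sub_mem x hw (hP w).1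
    exact (sub_eq_zero.mp (hinf _ h2 (hP w).2)).symm
  have hPa : ∀ w : W, w ∈ a → P w = 0 := by
    intro w hw
    have h2 : P w ∈ a := by
      have := Submodule.sub_mem a hw (hP w).2
      simpa using this
    exact hinf _ (hP w).1 h2
  -- kernel of P' is x^⊥
  have hker₁ : ∀ v : W, P' v = 0 → v ∈ perpSet β (x : Set W) := by
    intro v hv s hs
    apply hsymm0
    have h := hadj v s
    rw [hPx s hs, hv, hz1] at h
    exact h
  have hker₂ : ∀ v : W, v ∈ perpSet β (x : Set W) → P' v = 0 := by
    intro v hv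
    apply hnd₁
    intro w
    rw [← hadj]
    exact hsymm0 _ _ (hv (P w) (hP w).1)
  -- range of P' : P' v ∈ a^⊥ always
  have hrange₁ : ∀ v : W, P' v ∈ perpSet β (a : Set W) := by
    intro v s hs
    apply hsymm0
    have h := hadj v s
    rw [hPa s hs, hz2] at h
    exact h.symm
  -- a^⊥ elements are fixed by P'
  have hfix : ∀ u : W, u ∈ perpSet β (a : Set W) → P' u = u := by
    intro u hu
    apply hext₁
    intro w
    rw [← hadj]
    have h1 : β u (w - P w) = 0 := hsymm0 _ _ (hu _ (hP w).2)
    rw [hsub₂] at h1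
    exact (sub_eq_zero.mp h1).symm
  -- pairing of x with P' v
  have hsPv : ∀ s : W, s ∈ x → ∀ v : W, β s (P' v) = β s v := by
    intro s hs v
    have k2 : β (P' v) s = β v s := by rw [← hadj, hPx s hs]
    rcases hherm with hh | hh
    · rw [hh s (P' v), k2]; exact (hh s v).symm
    · rw [hh s (P' v), k2]; exact (hh s v).symm
  -- v - P' v ∈ x^⊥
  have hcompl : ∀ v : W, v - P' v ∈ perpSet β (x : Set W) := by
    intro v s hs
    rw [hsub₂, hsPv s hs, sub_self]
  refine ⟨fun v => hfix _ (hrange₁ v), ?_, ?_, fun v => ⟨hrange₁ v, hcompl v⟩, ?_, ?_, ?_⟩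
  · ext v
    exact ⟨fun h => hker₁ v h, fun h => hker₂ v h⟩
  · ext u
    constructor
    · rintro ⟨v, rfl⟩
      exact hrange₁ v
    · intro hu
      exact ⟨u, hfix u hu⟩
  · ext v
    simp only [Set.mem_inter_iff, Set.mem_singleton_iff]
    constructor
    · rintro ⟨h1, h2⟩
      have := hfix v h2
      rw [hker₂ v h1] at this
      exact this.symm
    · rintro rfl
      exact ⟨fun s _ => hz2 s, fun s _ => hz2 s⟩
  · ext w
    constructor
    · intro hw
      -- show w ∈ x; the a-component u := w - P w vanishes
      have hu0 : ∀ s ∈ perpSet β (x : Set W), β s (w - P w) = 0 := by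
        intro s hs
        rw [hsub₂, hw s hs]
        have : β s (P w) = 0 := hsymm0 _ _ (hs (P w) (hP w).1)
        rw [this, sub_self]
      have hu : w - P w = 0 := by
        apply hnd₂
        intro v
        have e1 : β (P' v) (w - P w) = 0 := by
          rw [← hadj, hPa _ (hP w).2, hz2]
        have e2 : β (v - P' v) (w - P w) = 0 := hu0 _ (hcompl v)
        have h3 := hsub₁ v (P' v) (w - P w)
        rw [e2, e1, sub_zero] at h3
        exact h3.symm
      have : w = P w := sub_eq_zero.mp hu
      rw [this]; exact (hP w).1
    · intro hw s hs
      exact hsymm0 _ _ (hs w hw)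
  · ext w
    constructor
    · intro hw
      -- show w ∈ a; the x-component u := P w vanishes
      have hu0 : ∀ s ∈ perpSet β (a : Set W), β s (P w) = 0 := by
        intro s hs
        have h1 : β s (w - P w) = 0 := hsymm0 _ _ (hs _ (hP w).2)
        rw [hsub₂] at h1
        rw [← hw s hs]
        exact (sub_eq_zero.mp h1).symm
      have hu : P w = 0 := by
        apply hnd₂
        intro v
        have e1 : β (P' v) (P w) = 0 := hu0 _ (hrange₁ v)
        rw [← hadj, hPx _ (hP w).1] at e1
        exact e1
      have := (hP w).2
      rw [hu, sub_zero] at this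
      exact this
    · intro hw s hs
      exact hsymm0 _ _ (hs w hw)
end

section
/- For the generalized projection P^a_x = { (ζ,ω) | ω ∈ x, ω - ζ ∈ a }, one has: image pr₂(P^a_x) = x, kernel P^a_x ∩ (W × 0) corresponds to a, indefiniteness P^a_x ∩ (0 × W) corresponds to a ⊓ x, and domain pr₁(P^a_x) = x ⊔ a. Moreover 1 - P^a_x = P^x_a, where 1 - F := { (ξ, ξ - α) | (ξ, α) ∈ F } is the relation-difference of the identity and F. -/
variable {R W : Type*} [Ring R] [AddCommGroup W] [Module R W]

/-- The generalized projection `P^a_x = { (ζ,ω) | ω ∈ x, ω - ζ ∈ a }`. -/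
def genProj (x a : Submodule R W) : Submodule R (W × W) where
  carrier := {p | p.2 ∈ x ∧ p.2 - p.1 ∈ a}
  add_mem' := fun {p q} hp hq => by
    refine ⟨x.add_mem hp.1 hq.1, ?_⟩
    have h : (p + q).2 - (p + q).1 = (p.2 - p.1) + (q.2 - q.1) := by
      show p.2 + q.2 - (p.1 + q.1) = _; abel
    rw [h]; exact a.add_mem hp.2 hq.2
  zero_mem' := ⟨x.zero_mem, by simpa using a.zero_mem⟩
  smul_mem' := fun r p hp => by
    refine ⟨x.smul_mem r hp.1, ?_⟩
    have h : (r • p).2 - (r • p).1 = r • (p.2 - p.1) := by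
      show r • p.2 - r • p.1 = _; rw [smul_sub]
    rw [h]; exact a.smul_mem r hp.2

/-- The difference `F - G` of linear relations:
`{ (ξ, α-β) | (ξ,α) ∈ F, (ξ,β) ∈ G }`. -/
def relSub (F G : Submodule R (W × W)) : Submodule R (W × W) where
  carrier := {p | ∃ α β, (p.1, α) ∈ F ∧ (p.1, β) ∈ G ∧ p.2 = α - β}
  add_mem' := fun {p q} hp hq => by
    obtain ⟨α, β, h1, h2, h3⟩ := hp; obtain ⟨α', β', h1', h2', h3'⟩ := hq
    refine ⟨α + α', β + β', F.add_mem h1 h1', G.add_mem h2 h2', ?_⟩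
    show p.2 + q.2 = _; rw [h3, h3']; abel
  zero_mem' := ⟨0, 0, F.zero_mem, G.zero_mem, by simp⟩
  smul_mem' := fun r p hp => by
    obtain ⟨α, β, h1, h2, h3⟩ := hp
    refine ⟨r • α, r • β, F.smul_mem r h1, G.smul_mem r h2, ?_⟩
    show r • p.2 = _; rw [h3, smul_sub]

/-- The identity relation (diagonal). -/
def relOne : Submodule R (W × W) where
  carrier := {p | p.1 = p.2}
  add_mem' := fun {p q} hp hq => by
    show p.1 + q.1 = p.2 + q.2; rw [hp, hq]
  zero_mem' := rfl
  smul_mem' := fun r p hp => by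
    show r • p.1 = r • p.2; rw [hp]

/-- image, kernel, indefiniteness and domain of the generalized
projection `P^a_x`, and `1 - P^a_x = P^x_a`. -/
theorem stmt13 (x a : Submodule R W) :
    -- im P^a_x = x
    Submodule.map (LinearMap.snd R W W) (genProj x a) = x ∧
    -- ker P^a_x = P^a_x ∩ (W × 0) corresponds to a
    genProj x a ⊓ Submodule.prod ⊤ ⊥ = Submodule.prod a ⊥ ∧
    -- indef P^a_x = P^a_x ∩ (0 × W) corresponds to a ⊓ x
    genProj x a ⊓ Submodule.prod ⊥ ⊤ = Submodule.prod ⊥ (a ⊓ x) ∧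
    -- dom P^a_x = x ⊔ a
    Submodule.map (LinearMap.fst R W W) (genProj x a) = x ⊔ a ∧
    -- 1 - P^a_x = P^x_a
    relSub relOne (genProj x a) = genProj a x := by
  have mem : ∀ p : W × W, p ∈ genProj x a ↔ p.2 ∈ x ∧ p.2 - p.1 ∈ a := fun _ => Iff.rfl
  refine ⟨?_, ?_, ?_, ?_, ?_⟩
  · ext w
    simp only [Submodule.mem_map, LinearMap.snd_apply]
    constructor
    · rintro ⟨p, hp, rfl⟩; exact hp.1
    · intro hw; exact ⟨(w, w), ⟨hw, by simpa using a.zero_mem⟩, rfl⟩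
  · ext ⟨ζ, ω⟩
    simp only [Submodule.mem_inf, Submodule.mem_prod, Submodule.mem_top, Submodule.mem_bot,
      true_and, and_true, mem]
    constructor
    · rintro ⟨⟨hx, ha⟩, rfl⟩
      refine ⟨by simpa using a.neg_mem ha, rfl⟩
    · rintro ⟨ha, rfl⟩
      exact ⟨⟨x.zero_mem, by simpa using a.neg_mem ha⟩, rfl⟩
  · ext ⟨ζ, ω⟩
    simp only [Submodule.mem_inf, Submodule.mem_prod, Submodule.mem_top, Submodule.mem_bot,
      true_and, and_true, mem]
    constructor
    · rintro ⟨⟨hx, ha⟩, rfl⟩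
      exact ⟨rfl, by simpa using ha, hx⟩
    · rintro ⟨rfl, ha, hx⟩
      exact ⟨⟨hx, by simpa using ha⟩, rfl⟩
  · ext ζ
    simp only [Submodule.mem_map, LinearMap.fst_apply, Submodule.mem_sup]
    constructor
    · rintro ⟨⟨ζ', ω⟩, ⟨hx, ha⟩, rfl⟩
      exact ⟨ω, hx, -(ω - ζ'), a.neg_mem ha, by abel⟩
    · rintro ⟨ω, hx, α, ha, rfl⟩
      exact ⟨(ω + α, ω), ⟨hx, by simpa using a.neg_mem ha⟩, rfl⟩
  · ext ⟨ξ, η⟩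
    constructor
    · rintro ⟨α, β, (h1 : ξ = α), ⟨hx, ha⟩, (h3 : η = α - β)⟩
      subst h1
      refine ⟨?_, ?_⟩
      · show η ∈ a
        rw [h3]; simpa using a.neg_mem ha
      · show η - ξ ∈ x
        rw [h3]; simpa using x.neg_mem hx
    · rintro ⟨ha, hx⟩
      refine ⟨ξ, ξ - η, rfl, ⟨?_, ?_⟩, by abel⟩
      · simpa using x.neg_mem hx
      · simpa using a.neg_mem ha
end

section
/- Let F ⊆ W × W be any linear relation and c, z submodules of W. Then F ∘ P^c_z ∘ F⁻¹ = P^{F(c)}_{F(z)}, where F(z) = { δ | ∃γ ∈ z, (γ,δ) ∈ F } is the image of z under F and F⁻¹ = { (w,v) | (v,w) ∈ F }. -/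
variable {R W : Type*} [Ring R] [AddCommGroup W] [Module R W]

/-- Composition `G ∘ F` of linear relations. -/
def relComp (G F : Submodule R (W × W)) : Submodule R (W × W) where
  carrier := {p | ∃ v, (p.1, v) ∈ F ∧ (v, p.2) ∈ G}
  add_mem' := fun {p q} hp hq => by
    obtain ⟨v, hv1, hv2⟩ := hp; obtain ⟨w, hw1, hw2⟩ := hq
    exact ⟨v + w, F.add_mem hv1 hw1, G.add_mem hv2 hw2⟩
  zero_mem' := ⟨0, F.zero_mem, G.zero_mem⟩
  smul_mem' := fun r p hp => by
    obtain ⟨v, hv1, hv2⟩ := hp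
    exact ⟨r • v, F.smul_mem r hv1, G.smul_mem r hv2⟩

/-- The inverse of a linear relation. -/
def relInv (F : Submodule R (W × W)) : Submodule R (W × W) where
  carrier := {p | (p.2, p.1) ∈ F}
  add_mem' := fun hp hq => F.add_mem hp hq
  zero_mem' := F.zero_mem
  smul_mem' := fun r _ hp => F.smul_mem r hp

/-- The image of a submodule `z` under a linear relation `F`. -/
def relImg (F : Submodule R (W × W)) (z : Submodule R W) : Submodule R W where
  carrier := {δ | ∃ γ ∈ z, (γ, δ) ∈ F}
  add_mem' := fun {p q} hp hq => by
    obtain ⟨γ, hγ, hγF⟩ := hp; obtain ⟨γ', hγ', hγF'⟩ := hq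
    exact ⟨γ + γ', z.add_mem hγ hγ', F.add_mem hγF hγF'⟩
  zero_mem' := ⟨0, z.zero_mem, F.zero_mem⟩
  smul_mem' := fun r p hp => by
    obtain ⟨γ, hγ, hγF⟩ := hp
    exact ⟨r • γ, z.smul_mem r hγ, F.smul_mem r hγF⟩

/-- conjugation of a generalized projection by any linear
relation: `F ∘ P^c_z ∘ F⁻¹ = P^{F(c)}_{F(z)}`. -/
theorem stmt14 (F : Submodule R (W × W)) (c z : Submodule R W) :
    relComp F (relComp (genProj z c) (relInv F)) = genProj (relImg F z) (relImg F c) := by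
  ext p
  constructor
  · rintro ⟨v, ⟨u, hu, hvz, hvu⟩, hv⟩
    refine ⟨⟨v, hvz, hv⟩, ⟨v - u, hvu, ?_⟩⟩
    have := F.sub_mem hv hu
    simpa using this
  · rintro ⟨⟨γ, hγ, hγF⟩, ⟨γ', hγ', hγ'F⟩⟩
    refine ⟨γ, ⟨γ - γ', ?_, hγ, by simpa using hγ'⟩, hγF⟩
    have := F.sub_mem hγF hγ'F
    exact (by simpa using this : (γ - γ', p.1) ∈ F)
end

section
/- Let W be a module over a ring B and define, for submodules x,a,y,b,z of W, Γ(x,a,y,b,z) := { ω ∈ W | ∃ξ ∈ x, α ∈ a, η ∈ y, β ∈ b, ζ ∈ z : ω = ζ + α = ζ + η + ξ = ξ + β }. Then Γ(x,a,y,b,z) = (1 - P^x_a ∘ P^b_y)(z) and Γ(x,a,y,b,z) = (P^a_x - P^z_b)(y), where P^a_x is the generalized projection relation and the relation operations (composition, difference with the diagonal, image of a submodule) are as for linear relations. -/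
variable {R W : Type*} [Ring R] [AddCommGroup W] [Module R W]

/-- The global multiplication map `Γ(x,a,y,b,z)` of the Grassmannian geometry
(as a set). -/
def GammaSet (x a y b z : Submodule R W) : Set W :=
  {ω | ∃ ξ ∈ x, ∃ α ∈ a, ∃ η ∈ y, ∃ β ∈ b, ∃ ζ ∈ z,
    ω = ζ + α ∧ ω = ζ + η + ξ ∧ ω = ξ + β}

/-- the global multiplication map is given by
`Γ(x,a,y,b,z) = (1 - P^x_a ∘ P^b_y)(z)` and
`Γ(x,a,y,b,z) = (P^a_x - P^z_b)(y)`. -/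
theorem stmt19 (x a y b z : Submodule R W) :
    GammaSet x a y b z
      = (relImg (relSub relOne (relComp (genProj a x) (genProj y b))) z : Set W) ∧
    GammaSet x a y b z
      = (relImg (relSub (genProj x a) (genProj b z)) y : Set W) := by
  have mem_relImg : ∀ (F : Submodule R (W × W)) (u : Submodule R W) (δ : W),
      δ ∈ relImg F u ↔ ∃ γ ∈ u, (γ, δ) ∈ F := fun _ _ _ => Iff.rfl
  have mem_relSub : ∀ (F G : Submodule R (W × W)) (p : W × W),
      p ∈ relSub F G ↔ ∃ α β, (p.1, α) ∈ F ∧ (p.1, β) ∈ G ∧ p.2 = α - β :=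
    fun _ _ _ => Iff.rfl
  have mem_relComp : ∀ (G F : Submodule R (W × W)) (p : W × W),
      p ∈ relComp G F ↔ ∃ v, (p.1, v) ∈ F ∧ (v, p.2) ∈ G := fun _ _ _ => Iff.rfl
  have mem_genProj : ∀ (u v : Submodule R W) (p : W × W),
      p ∈ genProj u v ↔ p.2 ∈ u ∧ p.2 - p.1 ∈ v := fun _ _ _ => Iff.rfl
  have mem_relOne : ∀ (p : W × W), p ∈ (relOne : Submodule R (W × W)) ↔ p.1 = p.2 :=
    fun _ => Iff.rfl
  constructor
  · ext ω
    constructor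
    · rintro ⟨ξ, hξ, α, hα, η, hη, β, hβ, ζ, hζ, h1, h2, h3⟩
      rw [SetLike.mem_coe, mem_relImg]
      refine ⟨ζ, hζ, ?_⟩
      rw [mem_relSub]
      refine ⟨ζ, -α, (mem_relOne _).2 rfl, ?_, by rw [h1]; abel⟩
      rw [mem_relComp]
      refine ⟨-η, ?_, ?_⟩
      · rw [mem_genProj]
        refine ⟨y.neg_mem hη, ?_⟩
        have : -η - ζ = -β := by
          have : ζ + η = β := by
            have := h2.symm.trans h3
            have : ζ + η + ξ - ξ = ξ + β - ξ := by rw [this]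
            simpa [add_sub_cancel_right] using by linear_combination (norm := abel) this
          linear_combination (norm := abel) - this
        rw [this]; exact b.neg_mem hβ
      · rw [mem_genProj]
        refine ⟨a.neg_mem hα, ?_⟩
        have : -α - -η = -ξ := by
          have hax : α = ω - ζ := by rw [h1]; abel
          have : α - η = ξ := by rw [hax]; linear_combination (norm := abel) h2
          linear_combination (norm := abel) - this
        rw [this]; exact x.neg_mem hξ
    · intro h
      rw [SetLike.mem_coe, mem_relImg] at h
      obtain ⟨ζ, hζ, h⟩ := h
      rw [mem_relSub] at h
      obtain ⟨A, B, hA, hB, hω⟩ := h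
      rw [mem_relOne] at hA
      replace hA : ζ = A := hA
      rw [mem_relComp] at hB
      obtain ⟨v, hv1, hv2⟩ := hB
      rw [mem_genProj] at hv1 hv2
      replace hω : ω = A - B := hω
      refine ⟨-(B - v), x.neg_mem hv2.2, -B, a.neg_mem hv2.1, -v, y.neg_mem hv1.1,
        -(v - ζ), b.neg_mem hv1.2, ζ, hζ, ?_, ?_, ?_⟩ <;>
        · rw [hω, hA]; abel
  · ext ω
    constructor
    · rintro ⟨ξ, hξ, α, hα, η, hη, β, hβ, ζ, hζ, h1, h2, h3⟩
      rw [SetLike.mem_coe, mem_relImg]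
      refine ⟨-η, y.neg_mem hη, ?_⟩
      rw [mem_relSub]
      refine ⟨ξ, -β, ?_, ?_, by rw [h3]; abel⟩
      · rw [mem_genProj]
        refine ⟨hξ, ?_⟩
        have : ξ - -η = α := by
          have hax : α = ω - ζ := by rw [h1]; abel
          rw [hax]; linear_combination (norm := abel) - h2
        rw [this]; exact hα
      · rw [mem_genProj]
        refine ⟨b.neg_mem hβ, ?_⟩
        have : -β - -η = -ζ := by
          have h := h2.symm.trans h3
          rw [add_comm ξ β] at h
          have := add_right_cancel h
          linear_combination (norm := abel) this
        rw [this]; exact z.neg_mem hζ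
    · intro h
      rw [SetLike.mem_coe, mem_relImg] at h
      obtain ⟨η, hη, h⟩ := h
      rw [mem_relSub] at h
      obtain ⟨A, B, hA, hB, hω⟩ := h
      rw [mem_genProj] at hA hB
      replace hω : ω = A - B := hω
      refine ⟨A, hA.1, A - η, hA.2, -η, y.neg_mem hη, -B, b.neg_mem hB.1,
        -(B - η), z.neg_mem hB.2, ?_, ?_, ?_⟩ <;>
        · rw [hω]; abel
end
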